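/- arXiv:2510.18770 — 2 statements merged into one kernel-verified Lean document; each statement's English description precedes it below -/
import Mathlib

section
/- Let H be a finite graph (possibly with loops) with k automorphic similarity classes, G_0 a graph with distinguished vertex v_0, and G_n the graph obtained by appending a path of n new vertices at v_0. Then there exist real numbers λ_1,…,λ_k (depending only on H) and real numbers c_1,…,c_k (depending on G_0, v_0, H) such that hom(G_n,H) = Σ_{i=1}^k c_i λ_i^n for all n ≥ 0. -/
/-- A graph, possibly with loops but without multiple edges: a symmetric
adjacency relation on the vertex type. -/
structure LoopGraph (V : Type*) where
  Adj : V → V → Prop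
  symm : ∀ {u v}, Adj u v → Adj v u

/-- `f` is a homomorphism (H-coloring) from `G` to `H`. -/
def LoopGraph.IsHom {A B : Type*} (G : LoopGraph A) (H : LoopGraph B) (f : A → B) : Prop :=
  ∀ ⦃x y⦄, G.Adj x y → H.Adj (f x) (f y)

/-- The number of homomorphisms from `G` to `H`. -/
noncomputable def homCount {A B : Type*} (G : LoopGraph A) (H : LoopGraph B) : ℕ :=
  Nat.card {f : A → B // G.IsHom H f}

/-- `e` is an automorphism of `H`. -/
def IsAut {V : Type*} (H : LoopGraph V) (e : V ≃ V) : Prop :=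
  ∀ a b, H.Adj (e a) (e b) ↔ H.Adj a b

/-- `u` and `v` are automorphically similar in `H`. -/
def AutSim {V : Type*} (H : LoopGraph V) (u v : V) : Prop :=
  ∃ e : V ≃ V, IsAut H e ∧ e u = v

/-- The path on `n` vertices. -/
def pathGraph (n : ℕ) : LoopGraph (Fin n) where
  Adj i j := j.val = i.val + 1 ∨ i.val = j.val + 1
  symm h := h.symm

/-- Upward adjacency for `eGraph`. -/
def eUp (n : ℕ) (i j : Fin n) : Prop :=
  (j.val = i.val + 1 ∧ j.val ≤ n - 2) ∨ (i.val = n - 4 ∧ j.val = n - 1)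

/-- The tree `E_n`: the path on `n-1` vertices `0,…,n-2` with a pendant
vertex `n-1` attached to vertex `n-4` (distance 2 from the end `n-2`). -/
def eGraph (n : ℕ) : LoopGraph (Fin n) where
  Adj i j := eUp n i j ∨ eUp n j i
  symm h := h.symm

/-- Vertices of the spherically symmetric rooted tree `T(x,y,z)`. -/
abbrev TVert (x y z : ℕ) : Type :=
  Unit ⊕ Fin x ⊕ (Fin x × Fin y) ⊕ (Fin x × Fin y × Fin z)

/-- Parent-to-child adjacency in `T(x,y,z)`. -/
def tUp (x y z : ℕ) : TVert x y z → TVert x y z → Prop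
  | Sum.inl _, Sum.inr (Sum.inl _) => True
  | Sum.inr (Sum.inl i), Sum.inr (Sum.inr (Sum.inl p)) => p.1 = i
  | Sum.inr (Sum.inr (Sum.inl p)), Sum.inr (Sum.inr (Sum.inr q)) =>
      q.1 = p.1 ∧ q.2.1 = p.2
  | _, _ => False

/-- The tree `T(x,y,z)`: the root has `x` children, each child has `y`
children, each grandchild has `z` children. -/
def tGraph (x y z : ℕ) : LoopGraph (TVert x y z) where
  Adj a b := tUp x y z a b ∨ tUp x y z b a
  symm h := h.symm

/-- `T̂(x,y,z)`: `T(x,y,z)` with a loop added at the root. -/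
def tHatGraph (x y z : ℕ) : LoopGraph (TVert x y z) where
  Adj a b := tUp x y z a b ∨ tUp x y z b a ∨ (a = Sum.inl () ∧ b = Sum.inl ())
  symm := by
    rintro a b (h | h | ⟨h1, h2⟩)
    · exact Or.inr (Or.inl h)
    · exact Or.inl h
    · exact Or.inr (Or.inr ⟨h2, h1⟩)

/-- The distance level of a vertex of `T(x,y,z)` from the root. -/
def tLevel {x y z : ℕ} : TVert x y z → Fin 4
  | Sum.inl _ => 0
  | Sum.inr (Sum.inl _) => 1
  | Sum.inr (Sum.inr (Sum.inl _)) => 2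
  | Sum.inr (Sum.inr (Sum.inr _)) => 3

/-- Upward adjacency for the path-like extension of `G` at `v0`. -/
def extUp {A : Type*} (G : LoopGraph A) (v0 : A) (n : ℕ) :
    (A ⊕ Fin n) → (A ⊕ Fin n) → Prop := fun a b =>
  (∃ u w, G.Adj u w ∧ a = Sum.inl u ∧ b = Sum.inl w) ∨
  (∃ i : Fin n, i.val = 0 ∧ a = Sum.inl v0 ∧ b = Sum.inr i) ∨
  (∃ i j : Fin n, j.val = i.val + 1 ∧ a = Sum.inr i ∧ b = Sum.inr j)

/-- `G_n`: the graph obtained from `G_0 = G` by appending a path of `n` new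
vertices at `v0`. -/
def pathAppend {A : Type*} (G : LoopGraph A) (v0 : A) (n : ℕ) : LoopGraph (A ⊕ Fin n) where
  Adj a b := extUp G v0 n a b ∨ extUp G v0 n b a
  symm h := h.symm

section AuxWalk

open Finset Matrix
open scoped Classical

variable {V : Type*}

/-- `p` is a walk in `H` starting (one step after) `t`. -/
def WalkFrom (H : LoopGraph V) {n : ℕ} (t : V) (p : Fin n → V) : Prop :=
  (∀ j : Fin n, (j : ℕ) = 0 → H.Adj t (p j)) ∧
  (∀ i j : Fin n, (j : ℕ) = (i : ℕ) + 1 → H.Adj (p i) (p j))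

/-- The number of walks of length `n` starting at `t`. -/
noncomputable def walkFromCount (H : LoopGraph V) (n : ℕ) (t : V) : ℕ :=
  Nat.card {p : Fin n → V // WalkFrom H t p}

lemma walkFrom_succ_iff (H : LoopGraph V) {n : ℕ} (t : V) (p : Fin (n + 1) → V) :
    WalkFrom H t p ↔ H.Adj t (p 0) ∧ WalkFrom H (p 0) (Fin.tail p) := by
  constructor
  · rintro ⟨h1, h2⟩
    refine ⟨h1 0 rfl, fun j hj => ?_, fun i j hij => ?_⟩
    · have := h2 0 j.succ (by simp [Fin.val_succ, hj])
      simpa [Fin.tail] using this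
    · have := h2 i.succ j.succ (by simp [Fin.val_succ, hij])
      simpa [Fin.tail] using this
  · rintro ⟨h0, h1, h2⟩
    constructor
    · intro j hj
      have hj0 : j = 0 := Fin.ext hj
      rw [hj0]; exact h0
    · intro i j hij
      rcases Fin.eq_zero_or_eq_succ j with rfl | ⟨j', rfl⟩
      · simp at hij
      rcases Fin.eq_zero_or_eq_succ i with rfl | ⟨i', rfl⟩
      · have hj' : (j' : ℕ) = 0 := by
          have : (j' : ℕ) + 1 = 0 + 1 := by simpa [Fin.val_succ] using hij
          omega
        have := h1 j' hj'
        simpa [Fin.tail] using this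
      · have := h2 i' j' (by
          have : (j' : ℕ) + 1 = (i' : ℕ) + 1 + 1 := by simpa [Fin.val_succ] using hij
          omega)
        simpa [Fin.tail] using this

lemma walkFromCount_zero (H : LoopGraph V) (t : V) : walkFromCount H 0 t = 1 := by
  have huniq : ∀ p : Fin 0 → V, WalkFrom H t p :=
    fun p => ⟨fun j => j.elim0, fun i => i.elim0⟩
  haveI : Unique {p : Fin 0 → V // WalkFrom H t p} :=
    ⟨⟨⟨fun j => j.elim0, huniq _⟩⟩, fun a => Subtype.ext (funext fun j => j.elim0)⟩
  exact Nat.card_unique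

lemma walkFromCount_succ [Fintype V] (H : LoopGraph V) (n : ℕ) (t : V) :
    walkFromCount H (n + 1) t = ∑ s : V, if H.Adj t s then walkFromCount H n s else 0 := by
  classical
  have e : {p : Fin (n + 1) → V // WalkFrom H t p}
      ≃ Σ s : V, {p : Fin n → V // H.Adj t s ∧ WalkFrom H s p} :=
    ((Fin.consEquiv (fun _ : Fin (n + 1) => V)).symm.subtypeEquiv (fun p => by
        rw [walkFrom_succ_iff]
        exact Iff.rfl)).trans
      (Equiv.subtypeProdEquivSigmaSubtype (fun s (q : Fin n → V) => H.Adj t s ∧ WalkFrom H s q))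
  rw [walkFromCount, Nat.card_congr e, Nat.card_eq_fintype_card, Fintype.card_sigma]
  refine Finset.sum_congr rfl fun s _ => ?_
  by_cases h : H.Adj t s
  · rw [if_pos h, walkFromCount, Nat.card_eq_fintype_card]
    exact Fintype.card_congr (Equiv.subtypeEquivRight fun p => by simp [h])
  · rw [if_neg h]
    haveI : IsEmpty {p : Fin n → V // H.Adj t s ∧ WalkFrom H s p} := ⟨fun p => h p.2.1⟩
    exact Fintype.card_eq_zero

lemma walkFromCount_aut [Fintype V] (H : LoopGraph V) (e : V ≃ V) (he : IsAut H e) :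
    ∀ (n : ℕ) (t : V), walkFromCount H n (e t) = walkFromCount H n t := by
  intro n
  induction n with
  | zero => intro t; rw [walkFromCount_zero, walkFromCount_zero]
  | succ n ih =>
    intro t
    rw [walkFromCount_succ, walkFromCount_succ]
    rw [← Equiv.sum_comp e (fun s => if H.Adj (e t) s then walkFromCount H n s else 0)]
    refine Finset.sum_congr rfl fun s _ => ?_
    rw [he]
    by_cases h : H.Adj t s
    · rw [if_pos h, if_pos h, ih]
    · rw [if_neg h, if_neg h]

lemma isHom_pathAppend_iff {A : Type*} (G0 : LoopGraph A) (v0 : A) (H : LoopGraph V) {n : ℕ}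
    (f : A ⊕ Fin n → V) :
    (pathAppend G0 v0 n).IsHom H f ↔
      G0.IsHom H (f ∘ Sum.inl) ∧ WalkFrom H (f (Sum.inl v0)) (f ∘ Sum.inr) := by
  constructor
  · intro hf
    exact ⟨fun u w h => hf (Or.inl (Or.inl ⟨u, w, h, rfl, rfl⟩)),
      fun j hj => hf (Or.inl (Or.inr (Or.inl ⟨j, hj, rfl, rfl⟩))),
      fun i j hij => hf (Or.inl (Or.inr (Or.inr ⟨i, j, hij, rfl, rfl⟩)))⟩
  · rintro ⟨hg, hw1, hw2⟩
    have key : ∀ a b, extUp G0 v0 n a b → H.Adj (f a) (f b) := by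
      rintro a b (⟨u, w, h, rfl, rfl⟩ | ⟨i, hi, rfl, rfl⟩ | ⟨i, j, hij, rfl, rfl⟩)
      · exact hg h
      · exact hw1 i hi
      · exact hw2 i j hij
    rintro a b (h | h)
    · exact key a b h
    · exact H.symm (key b a h)

lemma homCount_pathAppend {A : Type*} [Fintype A] [Fintype V] (G0 : LoopGraph A) (v0 : A)
    (H : LoopGraph V) (n : ℕ) :
    homCount (pathAppend G0 v0 n) H
      = ∑ g : A → V, if G0.IsHom H g then walkFromCount H n (g v0) else 0 := by
  classical
  have e : {f : A ⊕ Fin n → V // (pathAppend G0 v0 n).IsHom H f}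
      ≃ Σ g : A → V, {p : Fin n → V // G0.IsHom H g ∧ WalkFrom H (g v0) p} :=
    ((Equiv.sumArrowEquivProdArrow A (Fin n) V).subtypeEquiv (fun f => by
        rw [isHom_pathAppend_iff]
        exact Iff.rfl)).trans
      (Equiv.subtypeProdEquivSigmaSubtype
        (fun (g : A → V) (p : Fin n → V) => G0.IsHom H g ∧ WalkFrom H (g v0) p))
  rw [homCount, Nat.card_congr e, Nat.card_eq_fintype_card, Fintype.card_sigma]
  refine Finset.sum_congr rfl fun g _ => ?_
  by_cases h : G0.IsHom H g
  · rw [if_pos h, walkFromCount, Nat.card_eq_fintype_card]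
    exact Fintype.card_congr (Equiv.subtypeEquivRight fun p => by simp [h])
  · rw [if_neg h]
    haveI : IsEmpty {p : Fin n → V // G0.IsHom H g ∧ WalkFrom H (g v0) p} := ⟨fun p => h p.2.1⟩
    exact Fintype.card_eq_zero

end AuxWalk

open Matrix in

theorem stmt4 {V A : Type*} [Fintype V] [Fintype A] (H : LoopGraph V)
    (k : ℕ) (cls : Fin k → Set V)
    (horb : ∀ i, ∃ w, cls i = {t | AutSim H w t})
    (hcover : ∀ t : V, ∃! i, t ∈ cls i)
    (G0 : LoopGraph A) (v0 : A) :
    ∃ lam c : Fin k → ℝ, ∀ n : ℕ,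
      (homCount (pathAppend G0 v0 n) H : ℝ) = ∑ i, c i * lam i ^ n := by
  classical
  choose rep hrep using horb
  have hrepmem : ∀ i, rep i ∈ cls i := fun i => by
    rw [hrep]; exact ⟨Equiv.refl V, fun a b => Iff.rfl, rfl⟩
  choose π hπ1 hπ2 using hcover
  -- basic automorphism facts
  have haut_trans : ∀ (e f : V ≃ V), IsAut H e → IsAut H f → IsAut H (e.trans f) :=
    fun e f he hf a b => by
      simp only [Equiv.trans_apply]; rw [hf, he]
  have haut_symm : ∀ e : V ≃ V, IsAut H e → IsAut H e.symm := fun e he a b => by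
    conv_rhs => rw [← e.apply_symm_apply a, ← e.apply_symm_apply b]
    rw [he]
  have hmem_iff : ∀ (e : V ≃ V), IsAut H e → ∀ (j : Fin k) (s : V),
      e s ∈ cls j ↔ s ∈ cls j := by
    intro e he j s
    rw [hrep]
    simp only [Set.mem_setOf_eq]
    constructor
    · rintro ⟨e', he', hs⟩
      exact ⟨e'.trans e.symm, haut_trans _ _ he' (haut_symm e he), by
        rw [Equiv.trans_apply, hs, Equiv.symm_apply_apply]⟩
    · rintro ⟨e', he', hs⟩
      exact ⟨e'.trans e, haut_trans _ _ he' he, by rw [Equiv.trans_apply, hs]⟩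
  have hmemπ : ∀ (s : V) (j : Fin k), s ∈ cls j ↔ π s = j :=
    fun s j => ⟨fun h => (hπ2 s j h).symm, fun h => h ▸ hπ1 s⟩
  have hsim : ∀ s : V, ∃ e : V ≃ V, IsAut H e ∧ e (rep (π s)) = s := fun s => by
    have h0 : s ∈ cls (π s) := hπ1 s
    rw [hrep] at h0; exact h0
  -- walk counts only depend on the class
  have hwalk_cls : ∀ (n : ℕ) (s : V), walkFromCount H n s = walkFromCount H n (rep (π s)) := by
    intro n s
    obtain ⟨e, he, hes⟩ := hsim s
    conv_lhs => rw [← hes]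
    exact walkFromCount_aut H e he n _
  -- neighbour counts only depend on the class of the base point
  have hcnt : ∀ (u u' : V) (e : V ≃ V), IsAut H e → e u = u' → ∀ j : Fin k,
      (∑ s : V, if H.Adj u s ∧ s ∈ cls j then (1 : ℝ) else 0)
        = ∑ s : V, if H.Adj u' s ∧ s ∈ cls j then (1 : ℝ) else 0 := by
    rintro u _ e he rfl j
    rw [← Equiv.sum_comp e (fun s => if H.Adj (e u) s ∧ s ∈ cls j then (1 : ℝ) else 0)]
    refine Finset.sum_congr rfl fun s _ => ?_
    have hiff : (H.Adj u s ∧ s ∈ cls j) ↔ (H.Adj (e u) (e s) ∧ e s ∈ cls j) := by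
      rw [he, hmem_iff e he]
    exact if_congr hiff rfl rfl
  -- the quotient matrix
  set M : Matrix (Fin k) (Fin k) ℝ :=
    Matrix.of (fun i j => ∑ s : V, if H.Adj (rep i) s ∧ s ∈ cls j then (1 : ℝ) else 0)
    with hMdef
  have hMapp : ∀ i j, M i j = ∑ s : V, if H.Adj (rep i) s ∧ s ∈ cls j then (1 : ℝ) else 0 :=
    fun i j => rfl
  -- pushing a class function through one step of the walk recursion
  have hstep : ∀ (v : Fin k → ℝ) (i : Fin k),
      (∑ s : V, if H.Adj (rep i) s then v (π s) else 0) = ∑ j, M i j * v j := by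
    intro v i
    have hterm : ∀ j, M i j * v j
        = ∑ s : V, if H.Adj (rep i) s ∧ π s = j then v j else 0 := by
      intro j
      rw [hMapp, Finset.sum_mul]
      refine Finset.sum_congr rfl fun s _ => ?_
      by_cases h : H.Adj (rep i) s ∧ s ∈ cls j
      · rw [if_pos h, if_pos ⟨h.1, (hmemπ _ _).1 h.2⟩, one_mul]
      · rw [if_neg h, if_neg (fun hc => h ⟨hc.1, (hmemπ _ _).2 hc.2⟩), zero_mul]
    simp only [hterm]
    rw [Finset.sum_comm]
    refine Finset.sum_congr rfl fun s _ => ?_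
    by_cases h : H.Adj (rep i) s
    · simp [h]
    · simp [h]
  -- the walk-count vector in terms of powers of M
  have hWM : ∀ (n : ℕ) (i : Fin k),
      (walkFromCount H n (rep i) : ℝ) = ((M ^ n) *ᵥ (fun _ => (1 : ℝ))) i := by
    intro n
    induction n with
    | zero =>
      intro i
      rw [walkFromCount_zero, pow_zero, Matrix.one_mulVec]
      norm_num
    | succ n ih =>
      intro i
      rw [walkFromCount_succ]
      push_cast
      have h1 : (∑ s : V, if H.Adj (rep i) s then (walkFromCount H n s : ℝ) else 0)
          = ∑ s : V, if H.Adj (rep i) s then ((M ^ n) *ᵥ (fun _ => (1 : ℝ))) (π s) else 0 := by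
        refine Finset.sum_congr rfl fun s _ => ?_
        rw [hwalk_cls n s, ih (π s)]
      rw [h1, hstep]
      rw [show M ^ (n + 1) = M * M ^ n from pow_succ' M n, ← Matrix.mulVec_mulVec]
      rfl
  -- the weight vector from G0
  set Nv : Fin k → ℝ :=
    (fun j => ∑ g : A → V, if G0.IsHom H g ∧ π (g v0) = j then (1 : ℝ) else 0) with hNvdef
  have hhom : ∀ n : ℕ, (homCount (pathAppend G0 v0 n) H : ℝ)
      = Nv ⬝ᵥ ((M ^ n) *ᵥ (fun _ => (1 : ℝ))) := by
    intro n
    rw [homCount_pathAppend G0 v0 H n]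
    push_cast
    have h1 : (∑ g : A → V, if G0.IsHom H g then (walkFromCount H n (g v0) : ℝ) else 0)
        = ∑ g : A → V, if G0.IsHom H g
            then ((M ^ n) *ᵥ (fun _ => (1 : ℝ))) (π (g v0)) else 0 := by
      refine Finset.sum_congr rfl fun g _ => ?_
      rw [hwalk_cls n (g v0), hWM n (π (g v0))]
    rw [h1]
    rw [← Finset.sum_fiberwise Finset.univ (fun g : A → V => π (g v0))
      (fun g => if G0.IsHom H g then ((M ^ n) *ᵥ (fun _ => (1 : ℝ))) (π (g v0)) else 0)]
    show _ = ∑ j, Nv j * ((M ^ n) *ᵥ (fun _ => (1 : ℝ))) j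
    refine Finset.sum_congr rfl fun j _ => ?_
    simp only [hNvdef]; rw [Finset.sum_filter, Finset.sum_mul]
    refine Finset.sum_congr rfl fun g _ => ?_
    by_cases h1 : π (g v0) = j <;> by_cases h2 : G0.IsHom H g <;> simp [h1, h2]
  -- sizes of the classes
  set sV : Fin k → ℝ := (fun i => ∑ u : V, if u ∈ cls i then (1 : ℝ) else 0) with hsVdef
  have hsV_pos : ∀ i, 0 < sV i := by
    intro i
    simp only [hsVdef]
    simp only [Finset.sum_boole]
    have : rep i ∈ Finset.univ.filter (fun u => u ∈ cls i) :=
      Finset.mem_filter.mpr ⟨Finset.mem_univ _, hrepmem i⟩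
    exact_mod_cast Finset.card_pos.mpr ⟨rep i, this⟩
  -- the symmetry identity
  have hkey : ∀ i j, sV i * M i j
      = ∑ u : V, ∑ s : V, if u ∈ cls i ∧ H.Adj u s ∧ s ∈ cls j then (1 : ℝ) else 0 := by
    intro i j
    simp only [hsVdef]
    rw [Finset.sum_mul]
    refine Finset.sum_congr rfl fun u _ => ?_
    by_cases hu : u ∈ cls i
    · rw [if_pos hu, one_mul, hMapp]
      have hsimu : ∃ e : V ≃ V, IsAut H e ∧ e (rep i) = u := by
        have h0 : u ∈ cls i := hu
        rw [hrep] at h0; exact h0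
      obtain ⟨e, he, heu⟩ := hsimu
      rw [hcnt (rep i) u e he heu j]
      refine Finset.sum_congr rfl fun s _ => ?_
      exact if_congr (by simp [hu]) rfl rfl
    · rw [if_neg hu, zero_mul]
      symm
      refine Finset.sum_eq_zero fun s _ => ?_
      rw [if_neg (fun hc => hu hc.1)]
  have hsym : ∀ i j, sV i * M i j = sV j * M j i := by
    intro i j
    rw [hkey i j, hkey j i, Finset.sum_comm]
    refine Finset.sum_congr rfl fun s _ => Finset.sum_congr rfl fun u _ => ?_
    refine if_congr ⟨fun h => ⟨h.2.2, H.symm h.2.1, h.1⟩, fun h => ⟨h.2.2, H.symm h.2.1, h.1⟩⟩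
      rfl rfl
  -- square roots of class sizes
  set d : Fin k → ℝ := (fun i => Real.sqrt (sV i)) with hddef
  have hd_pos : ∀ i, 0 < d i := fun i => Real.sqrt_pos.mpr (hsV_pos i)
  have hdne : ∀ i, d i ≠ 0 := fun i => ne_of_gt (hd_pos i)
  have hdd : ∀ i, d i * d i = sV i := fun i => Real.mul_self_sqrt (le_of_lt (hsV_pos i))
  -- the symmetrized matrix
  set S : Matrix (Fin k) (Fin k) ℝ := Matrix.of (fun i j => d i * M i j * (d j)⁻¹) with hSdef
  have hSapp : ∀ i j, S i j = d i * M i j * (d j)⁻¹ := fun i j => rfl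
  have hS : S.IsHermitian := by
    refine Matrix.IsHermitian.ext fun i j => ?_
    rw [star_trivial, hSapp, hSapp]
    have h1 : d j * d j * M j i = d i * d i * M i j := by
      rw [hdd, hdd]; exact hsym j i
    have hdi := hdne i
    have hdj := hdne j
    field_simp
    linear_combination h1
  -- diagonal conjugation
  have hDiD : Matrix.diagonal (fun i => (d i)⁻¹) * Matrix.diagonal d = (1 : Matrix (Fin k) (Fin k) ℝ) := by
    rw [Matrix.diagonal_mul_diagonal,
      show (fun i => (d i)⁻¹ * d i) = fun _ => (1 : ℝ) from funext fun i => inv_mul_cancel₀ (hdne i),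
      Matrix.diagonal_one]
  have hDDi : Matrix.diagonal d * Matrix.diagonal (fun i => (d i)⁻¹) = (1 : Matrix (Fin k) (Fin k) ℝ) := by
    rw [Matrix.diagonal_mul_diagonal,
      show (fun i => d i * (d i)⁻¹) = fun _ => (1 : ℝ) from funext fun i => mul_inv_cancel₀ (hdne i),
      Matrix.diagonal_one]
  have hMS : M = Matrix.diagonal (fun i => (d i)⁻¹) * S * Matrix.diagonal d := by
    refine Matrix.ext fun i j => ?_
    rw [Matrix.mul_diagonal, Matrix.diagonal_mul, hSapp]
    have hdi := hdne i
    have hdj := hdne j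
    field_simp
  have hMn : ∀ n : ℕ, M ^ n = Matrix.diagonal (fun i => (d i)⁻¹) * S ^ n * Matrix.diagonal d := by
    intro n
    induction n with
    | zero => rw [pow_zero, pow_zero, mul_one, hDiD]
    | succ n ih =>
      rw [pow_succ, pow_succ, ih]
      conv_lhs => rw [hMS]
      simp only [Matrix.mul_assoc]
      rw [← Matrix.mul_assoc (Matrix.diagonal d) (Matrix.diagonal (fun i => (d i)⁻¹)), hDDi,
        Matrix.one_mul]
  -- spectral theorem
  set U : Matrix (Fin k) (Fin k) ℝ := (hS.eigenvectorUnitary : Matrix (Fin k) (Fin k) ℝ)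
    with hUdef
  have hUsU : U * star U = 1 := Matrix.mem_unitaryGroup_iff.mp hS.eigenvectorUnitary.2
  have hsUU : star U * U = 1 := Matrix.mem_unitaryGroup_iff'.mp hS.eigenvectorUnitary.2
  set lam : Fin k → ℝ := hS.eigenvalues with hlamdef
  have hspec : S = U * Matrix.diagonal lam * star U := by
    have h := hS.spectral_theorem
    rw [RCLike.ofReal_real_eq_id, Function.id_comp] at h
    exact h
  have hSn : ∀ n : ℕ, S ^ n = U * Matrix.diagonal (fun i => lam i ^ n) * star U := by
    intro n
    induction n with
    | zero =>
      rw [pow_zero, show (fun i => lam i ^ 0) = fun _ => (1 : ℝ) from funext fun i => pow_zero _,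
        Matrix.diagonal_one, Matrix.mul_one, hUsU]
    | succ n ih =>
      rw [pow_succ, ih]
      conv_lhs => rw [hspec]
      simp only [Matrix.mul_assoc]
      rw [← Matrix.mul_assoc (star U) U, hsUU, Matrix.one_mul,
        ← Matrix.mul_assoc (Matrix.diagonal (fun i => lam i ^ n)) (Matrix.diagonal lam),
        Matrix.diagonal_mul_diagonal,
        show (fun i => lam i ^ n * lam i) = fun i => lam i ^ (n + 1) from
          funext fun i => (pow_succ _ _).symm]
  -- the final coefficient vectors
  set x : Fin k → ℝ := Nv ᵥ* (Matrix.diagonal (fun i => (d i)⁻¹) * U) with hxdef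
  set y : Fin k → ℝ := (star U * Matrix.diagonal d) *ᵥ (fun _ => (1 : ℝ)) with hydef
  refine ⟨lam, fun i => x i * y i, fun n => ?_⟩
  rw [hhom n, hMn n, hSn n]
  have hassoc : Matrix.diagonal (fun i => (d i)⁻¹)
        * (U * Matrix.diagonal (fun i => lam i ^ n) * star U) * Matrix.diagonal d
      = ((Matrix.diagonal (fun i => (d i)⁻¹) * U) * Matrix.diagonal (fun i => lam i ^ n))
        * (star U * Matrix.diagonal d) := by
    simp only [Matrix.mul_assoc]
  rw [hassoc, ← Matrix.mulVec_mulVec, ← Matrix.mulVec_mulVec, dotProduct_mulVec,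
    dotProduct_mulVec, ← hxdef, ← hydef]
  simp only [dotProduct, Matrix.vecMul_diagonal, Matrix.mulVec_diagonal]
  refine Finset.sum_congr rfl fun i _ => ?_
  ring
end

section
/- hom(E_7, T(18,3,32)) = 81548856 and hom(P_7, T(18,3,32)) = 81558090; in particular hom(E_7, T(18,3,32)) < hom(P_7, T(18,3,32)). -/
section Aux

instance tUpDec (x y z : ℕ) (a b : TVert x y z) : Decidable (tUp x y z a b) := by
  rcases a with _ | a | a | a <;> rcases b with _ | b | b | b <;>
    simp only [tUp] <;> infer_instance

instance tAdjDec (x y z : ℕ) (a b : TVert x y z) : Decidable ((tGraph x y z).Adj a b) :=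
  show Decidable (tUp x y z a b ∨ tUp x y z b a) from inferInstance

instance eUpDec (n : ℕ) (a b : Fin n) : Decidable (eUp n a b) := by
  unfold eUp; infer_instance

instance eAdjDec (n : ℕ) (a b : Fin n) : Decidable ((eGraph n).Adj a b) :=
  show Decidable (eUp n a b ∨ eUp n b a) from inferInstance

/-- Walks of length `n` in `T(x,y,z)` starting at `v`. -/
def Wk (x y z n : ℕ) (v : TVert x y z) : Type :=
  {g : Fin (n+1) → TVert x y z //
    g 0 = v ∧ ∀ i : Fin n, (tGraph x y z).Adj (g i.castSucc) (g i.succ)}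

instance (x y z n : ℕ) (v : TVert x y z) : Fintype (Wk x y z n v) :=
  Subtype.fintype _

/-- Neighbors of `v`. -/
def Nbr (x y z : ℕ) (v : TVert x y z) : Type :=
  {u : TVert x y z // (tGraph x y z).Adj v u}

instance (x y z : ℕ) (v : TVert x y z) : Fintype (Nbr x y z v) :=
  Subtype.fintype _

def wkSucc (x y z n : ℕ) (v : TVert x y z) :
    Wk x y z (n+1) v ≃ Σ u : Nbr x y z v, Wk x y z n u.1 where
  toFun g := ⟨⟨g.1 (Fin.succ 0), by
      have h := g.2.2 0
      rw [Fin.castSucc_zero, g.2.1] at h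
      exact h⟩,
    fun i => g.1 i.succ, rfl, fun i => by
      have h := g.2.2 i.succ
      rwa [← Fin.succ_castSucc] at h⟩
  invFun p := ⟨Fin.cons v p.2.1, by simp, by
      intro i
      refine Fin.cases ?_ ?_ i
      · rw [Fin.castSucc_zero, Fin.cons_zero]
        show (tGraph x y z).Adj v (p.2.1 0)
        rw [p.2.2.1]; exact p.1.2
      · intro j
        rw [← Fin.succ_castSucc, Fin.cons_succ, Fin.cons_succ]
        exact p.2.2.2 j⟩
  left_inv g := by
    apply Subtype.ext
    funext i
    refine Fin.cases ?_ ?_ i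
    · dsimp only
      simp [g.2.1]
    · intro j
      dsimp only
      simp
  right_inv p := by
    obtain ⟨⟨u, hu⟩, h, h0, hs⟩ := p
    obtain rfl : h 0 = u := h0
    rfl


def eN0 (x y z : ℕ) : Fin x ≃ Nbr x y z (Sum.inl ()) where
  toFun i := ⟨Sum.inr (Sum.inl i), Or.inl trivial⟩
  invFun u :=
    match u with
    | ⟨Sum.inr (Sum.inl i), _⟩ => i
    | ⟨Sum.inl (), h⟩ => (h.elim id id).elim
    | ⟨Sum.inr (Sum.inr (Sum.inl _)), h⟩ => (h.elim id id).elim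
    | ⟨Sum.inr (Sum.inr (Sum.inr _)), h⟩ => (h.elim id id).elim
  left_inv i := rfl
  right_inv u := by
    obtain ⟨(_ | (b | b | b)), h⟩ := u
    · exact (h.elim id id).elim
    · rfl
    · exact (h.elim id id).elim
    · exact (h.elim id id).elim

def eN1 (x y z : ℕ) (i : Fin x) : (Unit ⊕ Fin y) ≃ Nbr x y z (Sum.inr (Sum.inl i)) where
  toFun u :=
    match u with
    | Sum.inl _ => ⟨Sum.inl (), Or.inr trivial⟩
    | Sum.inr j => ⟨Sum.inr (Sum.inr (Sum.inl (i, j))), Or.inl rfl⟩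
  invFun u :=
    match u with
    | ⟨Sum.inl _, _⟩ => Sum.inl ()
    | ⟨Sum.inr (Sum.inr (Sum.inl p)), _⟩ => Sum.inr p.2
    | ⟨Sum.inr (Sum.inl _), h⟩ => (h.elim id id).elim
    | ⟨Sum.inr (Sum.inr (Sum.inr _)), h⟩ => (h.elim id id).elim
  left_inv u := by rcases u with _ | j <;> rfl
  right_inv u := by
    obtain ⟨(_ | (b | ⟨a, j⟩ | b)), h⟩ := u
    · rfl
    · exact (h.elim id id).elim
    · obtain rfl : a = i := h.elim id (fun h' => h'.elim)
      rfl
    · exact (h.elim id id).elim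

def eN2 (x y z : ℕ) (p : Fin x × Fin y) :
    (Unit ⊕ Fin z) ≃ Nbr x y z (Sum.inr (Sum.inr (Sum.inl p))) where
  toFun u :=
    match u with
    | Sum.inl _ => ⟨Sum.inr (Sum.inl p.1), Or.inr rfl⟩
    | Sum.inr k => ⟨Sum.inr (Sum.inr (Sum.inr (p.1, p.2, k))), Or.inl ⟨rfl, rfl⟩⟩
  invFun u :=
    match u with
    | ⟨Sum.inr (Sum.inl _), _⟩ => Sum.inl ()
    | ⟨Sum.inr (Sum.inr (Sum.inr q)), _⟩ => Sum.inr q.2.2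
    | ⟨Sum.inl _, h⟩ => (h.elim id id).elim
    | ⟨Sum.inr (Sum.inr (Sum.inl _)), h⟩ => (h.elim id id).elim
  left_inv u := by rcases u with _ | k <;> rfl
  right_inv u := by
    obtain ⟨(_ | (a | q | ⟨a, b, c⟩)), h⟩ := u
    · exact (h.elim id id).elim
    · obtain rfl : p.1 = a := h.elim (fun h' => h'.elim) id
      rfl
    · exact (h.elim id id).elim
    · obtain ⟨h1, h2⟩ : a = p.1 ∧ b = p.2 := h.elim id (fun h' => h'.elim)
      subst h1; subst h2; rfl

def eN3 (x y z : ℕ) (q : Fin x × Fin y × Fin z) :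
    Unit ≃ Nbr x y z (Sum.inr (Sum.inr (Sum.inr q))) where
  toFun _ := ⟨Sum.inr (Sum.inr (Sum.inl (q.1, q.2.1))), Or.inr ⟨rfl, rfl⟩⟩
  invFun _ := ()
  left_inv _ := rfl
  right_inv u := by
    obtain ⟨(_ | (a | ⟨a, b⟩ | w)), h⟩ := u
    · exact (h.elim id id).elim
    · exact (h.elim id id).elim
    · obtain ⟨h1, h2⟩ : q.1 = a ∧ q.2.1 = b := h.elim (fun h' => h'.elim) id
      subst h1; subst h2; rfl
    · exact (h.elim id id).elim


/-- Walk counts per level: `(from level 0, from level 1, from level 2, from level 3)`. -/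
def aF (x y z : ℕ) : ℕ → ℕ × ℕ × ℕ × ℕ
  | 0 => (1, 1, 1, 1)
  | n+1 =>
    (x * (aF x y z n).2.1,
     (aF x y z n).1 + y * (aF x y z n).2.2.1,
     (aF x y z n).2.1 + z * (aF x y z n).2.2.2,
     (aF x y z n).2.2.1)

def aL (x y z n : ℕ) : Fin 4 → ℕ :=
  ![(aF x y z n).1, (aF x y z n).2.1, (aF x y z n).2.2.1, (aF x y z n).2.2.2]

lemma card_Wk (x y z : ℕ) : ∀ n (v : TVert x y z),
    Nat.card (Wk x y z n v) = aL x y z n (tLevel v) := by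
  intro n
  induction n with
  | zero =>
    intro v
    have e : Wk x y z 0 v ≃ Unit :=
      { toFun := fun _ => Unit.unit
        invFun := fun _ => ⟨fun _ => v, rfl, fun i => i.elim0⟩
        left_inv := fun g => by
          apply Subtype.ext
          funext i
          dsimp only
          rw [show i = 0 from Fin.ext (by omega)]
          exact g.2.1.symm
        right_inv := fun _ => rfl }
    rw [Nat.card_congr e]
    have h1 : ∀ ℓ : Fin 4, aL x y z 0 ℓ = 1 := by
      intro ℓ
      fin_cases ℓ <;> rfl
    rw [h1]
    simp
  | succ n ih =>
    intro v
    rw [Nat.card_congr (wkSucc x y z n v), Nat.card_eq_fintype_card, Fintype.card_sigma]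
    have key : ∀ u : Nbr x y z v,
        Fintype.card (Wk x y z n u.1) = aL x y z n (tLevel u.1) := fun u => by
      rw [← Nat.card_eq_fintype_card, ih]; try rfl
    clear key
    rcases v with u | i | p | q
    · cases u
      rw [← Equiv.sum_comp (eN0 x y z) (fun u => Fintype.card (Wk x y z n u.1))]
      have h1 : ∀ i : Fin x, Fintype.card (Wk x y z n ((eN0 x y z) i).1) = aL x y z n 1 :=
        fun i => by rw [← Nat.card_eq_fintype_card, ih]; try rfl
      rw [Finset.sum_congr rfl (fun i _ => h1 i), Finset.sum_const, smul_eq_mul,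
        Finset.card_univ, Fintype.card_fin]
      rfl
    · rw [← Equiv.sum_comp (eN1 x y z i) (fun u => Fintype.card (Wk x y z n u.1)),
        Fintype.sum_sum_type]
      have h1 : ∀ u : Unit, Fintype.card (Wk x y z n ((eN1 x y z i) (Sum.inl u)).1)
          = aL x y z n 0 := fun u => by rw [← Nat.card_eq_fintype_card, ih]; try rfl
      have h2 : ∀ j : Fin y, Fintype.card (Wk x y z n ((eN1 x y z i) (Sum.inr j)).1)
          = aL x y z n 2 := fun j => by rw [← Nat.card_eq_fintype_card, ih]; try rfl
      rw [Finset.sum_congr rfl (fun u _ => h1 u), Finset.sum_congr rfl (fun j _ => h2 j),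
        Finset.sum_const, Finset.sum_const, smul_eq_mul, smul_eq_mul,
        Finset.card_univ, Finset.card_univ, Fintype.card_fin, Fintype.card_unit, one_mul]
      rfl
    · rw [← Equiv.sum_comp (eN2 x y z p) (fun u => Fintype.card (Wk x y z n u.1)),
        Fintype.sum_sum_type]
      have h1 : ∀ u : Unit, Fintype.card (Wk x y z n ((eN2 x y z p) (Sum.inl u)).1)
          = aL x y z n 1 := fun u => by rw [← Nat.card_eq_fintype_card, ih]; try rfl
      have h2 : ∀ k : Fin z, Fintype.card (Wk x y z n ((eN2 x y z p) (Sum.inr k)).1)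
          = aL x y z n 3 := fun k => by rw [← Nat.card_eq_fintype_card, ih]; try rfl
      rw [Finset.sum_congr rfl (fun u _ => h1 u), Finset.sum_congr rfl (fun k _ => h2 k),
        Finset.sum_const, Finset.sum_const, smul_eq_mul, smul_eq_mul,
        Finset.card_univ, Finset.card_univ, Fintype.card_fin, Fintype.card_unit, one_mul]
      rfl
    · rw [← Equiv.sum_comp (eN3 x y z q) (fun u => Fintype.card (Wk x y z n u.1))]
      have h1 : ∀ u : Unit, Fintype.card (Wk x y z n ((eN3 x y z q) u).1)
          = aL x y z n 2 := fun u => by rw [← Nat.card_eq_fintype_card, ih]; try rfl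
      rw [Finset.sum_congr rfl (fun u _ => h1 u), Finset.sum_const, smul_eq_mul,
        Finset.card_univ, Fintype.card_unit, one_mul]
      rfl


def pEquiv (x y z n : ℕ) :
    {f : Fin (n+1) → TVert x y z // (pathGraph (n+1)).IsHom (tGraph x y z) f} ≃
      Σ v : TVert x y z, Wk x y z n v where
  toFun f := ⟨f.1 0, f.1, rfl, fun i => f.2 (Or.inl (by simp))⟩
  invFun g := ⟨g.2.1, fun a b hab => by
    rcases hab with h | h
    · have ha : a.val < n := by omega
      have hst := g.2.2.2 ⟨a.val, ha⟩
      have e1 : a = Fin.castSucc ⟨a.val, ha⟩ := Fin.ext rfl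
      have e2 : b = Fin.succ ⟨a.val, ha⟩ := Fin.ext (by simpa using h)
      rw [e1, e2]; exact hst
    · have hb : b.val < n := by omega
      have hst := (tGraph x y z).symm (g.2.2.2 ⟨b.val, hb⟩)
      have e1 : b = Fin.castSucc ⟨b.val, hb⟩ := Fin.ext rfl
      have e2 : a = Fin.succ ⟨b.val, hb⟩ := Fin.ext (by simpa using h)
      rw [e1, e2]; exact hst⟩
  left_inv f := rfl
  right_inv g := by
    obtain ⟨v, h, h0, hs⟩ := g
    obtain rfl : h 0 = v := h0
    rfl


lemma eAdj : ∀ a b : Fin 7, (eGraph 7).Adj a b ↔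
    (a = 0 ∧ b = 1) ∨ (a = 1 ∧ b = 0) ∨ (a = 1 ∧ b = 2) ∨ (a = 2 ∧ b = 1) ∨
    (a = 2 ∧ b = 3) ∨ (a = 3 ∧ b = 2) ∨ (a = 3 ∧ b = 4) ∨ (a = 4 ∧ b = 3) ∨
    (a = 4 ∧ b = 5) ∨ (a = 5 ∧ b = 4) ∨ (a = 3 ∧ b = 6) ∨ (a = 6 ∧ b = 3) := by
  decide

def e7Equiv (x y z : ℕ) :
    {f : Fin 7 → TVert x y z // (eGraph 7).IsHom (tGraph x y z) f} ≃
      Σ v : TVert x y z, Wk x y z 3 v × Wk x y z 2 v × Wk x y z 1 v where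
  toFun f := ⟨f.1 3,
    ⟨![f.1 3, f.1 2, f.1 1, f.1 0], rfl, by
      intro i
      fin_cases i
      · exact f.2 (show (eGraph 7).Adj 3 2 by decide)
      · exact f.2 (show (eGraph 7).Adj 2 1 by decide)
      · exact f.2 (show (eGraph 7).Adj 1 0 by decide)⟩,
    ⟨![f.1 3, f.1 4, f.1 5], rfl, by
      intro i
      fin_cases i
      · exact f.2 (show (eGraph 7).Adj 3 4 by decide)
      · exact f.2 (show (eGraph 7).Adj 4 5 by decide)⟩,
    ⟨![f.1 3, f.1 6], rfl, by
      intro i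
      fin_cases i
      · exact f.2 (show (eGraph 7).Adj 3 6 by decide)⟩⟩
  invFun g :=
    ⟨![g.2.1.1 3, g.2.1.1 2, g.2.1.1 1, g.2.1.1 0, g.2.2.1.1 1, g.2.2.1.1 2, g.2.2.2.1 1], by
      obtain ⟨v, ⟨g1, h1, a1⟩, ⟨g2, h2, a2⟩, ⟨g3, h3, a3⟩⟩ := g
      intro a b hab
      have sym : ∀ {a b : TVert x y z}, (tGraph x y z).Adj a b → (tGraph x y z).Adj b a :=
        fun h => (tGraph x y z).symm h
      rcases (eAdj a b).1 hab with ⟨rfl, rfl⟩ | ⟨rfl, rfl⟩ | ⟨rfl, rfl⟩ | ⟨rfl, rfl⟩ |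
        ⟨rfl, rfl⟩ | ⟨rfl, rfl⟩ | ⟨rfl, rfl⟩ | ⟨rfl, rfl⟩ | ⟨rfl, rfl⟩ | ⟨rfl, rfl⟩ |
        ⟨rfl, rfl⟩ | ⟨rfl, rfl⟩
      · exact sym (a1 ⟨2, by norm_num⟩)
      · exact a1 ⟨2, by norm_num⟩
      · exact sym (a1 ⟨1, by norm_num⟩)
      · exact a1 ⟨1, by norm_num⟩
      · exact sym (a1 ⟨0, by norm_num⟩)
      · exact a1 ⟨0, by norm_num⟩
      · show (tGraph x y z).Adj (g1 0) (g2 1)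
        rw [h1, ← h2]; exact a2 ⟨0, by norm_num⟩
      · show (tGraph x y z).Adj (g2 1) (g1 0)
        rw [h1, ← h2]; exact sym (a2 ⟨0, by norm_num⟩)
      · exact a2 ⟨1, by norm_num⟩
      · exact sym (a2 ⟨1, by norm_num⟩)
      · show (tGraph x y z).Adj (g1 0) (g3 1)
        rw [h1, ← h3]; exact a3 ⟨0, by norm_num⟩
      · show (tGraph x y z).Adj (g3 1) (g1 0)
        rw [h1, ← h3]; exact sym (a3 ⟨0, by norm_num⟩)⟩
  left_inv f := by
    apply Subtype.ext
    funext i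
    fin_cases i <;> rfl
  right_inv g := by
    obtain ⟨v, ⟨g1, h1, a1⟩, ⟨g2, h2, a2⟩, ⟨g3, h3, a3⟩⟩ := g
    obtain rfl : g1 0 = v := h1
    refine Sigma.ext rfl (heq_of_eq ?_)
    refine Prod.ext (Subtype.ext ?_) (Prod.ext (Subtype.ext ?_) (Subtype.ext ?_))
    · funext i; fin_cases i <;> rfl
    · funext i
      fin_cases i
      · exact h2.symm.trans rfl
      · rfl
      · rfl
    · funext i
      fin_cases i
      · exact h3.symm.trans rfl
      · rfl

end Aux

set_option maxRecDepth 10000 in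
theorem stmt8 :
    homCount (eGraph 7) (tGraph 18 3 32) = 81548856 ∧
    homCount (pathGraph 7) (tGraph 18 3 32) = 81558090 ∧
    homCount (eGraph 7) (tGraph 18 3 32) < homCount (pathGraph 7) (tGraph 18 3 32) := by
  have hE : homCount (eGraph 7) (tGraph 18 3 32) = 81548856 := by
    have h1 : homCount (eGraph 7) (tGraph 18 3 32) =
        Nat.card (Σ v : TVert 18 3 32, Wk 18 3 32 3 v × Wk 18 3 32 2 v × Wk 18 3 32 1 v) :=
      Nat.card_congr (e7Equiv 18 3 32)
    rw [h1, Nat.card_eq_fintype_card, Fintype.card_sigma]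
    have h2 : ∀ v : TVert 18 3 32,
        Fintype.card (Wk 18 3 32 3 v × Wk 18 3 32 2 v × Wk 18 3 32 1 v) =
          aL 18 3 32 3 (tLevel v) * (aL 18 3 32 2 (tLevel v) * aL 18 3 32 1 (tLevel v)) := by
      intro v
      rw [Fintype.card_prod, Fintype.card_prod,
        ← Nat.card_eq_fintype_card, ← Nat.card_eq_fintype_card, ← Nat.card_eq_fintype_card,
        card_Wk, card_Wk, card_Wk]
    rw [Finset.sum_congr rfl (fun v _ => h2 v)]
    decide
  have hP : homCount (pathGraph 7) (tGraph 18 3 32) = 81558090 := by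
    have h1 : homCount (pathGraph 7) (tGraph 18 3 32) =
        Nat.card (Σ v : TVert 18 3 32, Wk 18 3 32 6 v) :=
      Nat.card_congr (pEquiv 18 3 32 6)
    rw [h1, Nat.card_eq_fintype_card, Fintype.card_sigma]
    have h2 : ∀ v : TVert 18 3 32,
        Fintype.card (Wk 18 3 32 6 v) = aL 18 3 32 6 (tLevel v) := by
      intro v
      rw [← Nat.card_eq_fintype_card, card_Wk]
    rw [Finset.sum_congr rfl (fun v _ => h2 v)]
    decide
  exact ⟨hE, hP, by rw [hE, hP]; norm_num⟩
end
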